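/- Let n, k be positive integers, d = gcd(n,k), and a ∈ GF(2^n). The equation x^{2^k} + x = a has a solution in GF(2^n) if and only if T_d^n(a) = 0, and in that case it has exactly 2^d solutions in GF(2^n). -/

import Mathlib

/-- `T l k x = ∑_{i=0}^{k/l - 1} x^(2^(l*i))`, the linearized trace-like polynomial. -/
noncomputable def T {F : Type*} [Field F] (l k : ℕ) (x : F) : F :=
  ∑ i ∈ Finset.range (k / l), x ^ (2 ^ (l * i))

open Finset Polynomial

namespace Stmt17Aux

variable {F : Type*} [Field F] [CharP F 2]

lemma pow_pow (x : F) (a b : ℕ) : (x ^ 2 ^ a) ^ 2 ^ b = x ^ 2 ^ (a + b) := by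
  rw [← pow_mul, ← pow_add]

lemma frob_add (e : ℕ) (x y : F) : (x + y) ^ 2 ^ e = x ^ 2 ^ e + y ^ 2 ^ e :=
  add_pow_char_pow x y 2 e

lemma fixed_mul (x : F) {m : ℕ} (h : x ^ 2 ^ m = x) (q : ℕ) : x ^ 2 ^ (m * q) = x := by
  induction q with
  | zero => simp
  | succ q ih => rw [Nat.mul_succ, ← pow_pow, ih, h]

lemma fixed_of_dvd (x : F) {m n : ℕ} (hd : m ∣ n) (h : x ^ 2 ^ m = x) : x ^ 2 ^ n = x := by
  obtain ⟨q, rfl⟩ := hd; exact fixed_mul x h q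

lemma fixed_gcd (x : F) : ∀ n k : ℕ, x ^ 2 ^ n = x → x ^ 2 ^ k = x →
    x ^ 2 ^ Nat.gcd n k = x := by
  intro n k
  induction n, k using Nat.gcd.induction with
  | H0 k => intro _ h; simpa using h
  | H1 n k hn ih =>
    intro h1 h2
    rw [Nat.gcd_rec]
    refine ih ?_ h1
    have hmod : n * (k / n) + k % n = k := Nat.div_add_mod k n
    calc x ^ 2 ^ (k % n) = (x ^ 2 ^ (n * (k / n))) ^ 2 ^ (k % n) := by
          rw [fixed_mul x h1]
      _ = x ^ 2 ^ (n * (k / n) + k % n) := pow_pow x _ _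
      _ = x := by rw [hmod, h2]

lemma sum_shift {M : Type*} [AddCommGroup M] (m : ℕ) (c : ℕ) :
    ∀ g : ℕ → M, (∀ j, g (j + m) = g j) →
      ∑ i ∈ Finset.range m, g (c + i) = ∑ i ∈ Finset.range m, g i := by
  induction c with
  | zero => intro g _; simp
  | succ c ih =>
    intro g hg
    have key : ∑ i ∈ Finset.range m, g (i + 1) = ∑ i ∈ Finset.range m, g i := by
      have h1 := Finset.sum_range_succ' g m
      have h2 := Finset.sum_range_succ g m
      have h3 : g m = g 0 := by simpa using hg 0
      rw [h2, h3] at h1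
      exact (add_right_cancel h1).symm
    calc ∑ i ∈ Finset.range m, g (c + 1 + i)
        = ∑ i ∈ Finset.range m, (fun j => g (j + 1)) (c + i) := by
          refine Finset.sum_congr rfl fun i _ => ?_
          simp only []
          congr 1
          omega
      _ = ∑ i ∈ Finset.range m, g (i + 1) := by
          refine ih (fun j => g (j + 1)) fun j => ?_
          show g (j + m + 1) = g (j + 1)
          rw [show j + m + 1 = j + 1 + m by omega]
          exact hg (j + 1)
      _ = ∑ i ∈ Finset.range m, g i := key

lemma card_fixed (m : ℕ) (hm : 0 < m) :
    {x : AlgebraicClosure (ZMod 2) | x ^ 2 ^ m = x}.Finite ∧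
    {x : AlgebraicClosure (ZMod 2) | x ^ 2 ^ m = x}.ncard = 2 ^ m := by
  classical
  set K := AlgebraicClosure (ZMod 2)
  set P : K[X] := X ^ 2 ^ m - X with hP
  have hsep : P.Separable := galois_poly_separable 2 (2 ^ m) (dvd_pow_self 2 hm.ne')
  have hdeg : P.natDegree = 2 ^ m := by
    rw [hP, natDegree_sub_eq_left_of_natDegree_lt, natDegree_X_pow]
    rw [natDegree_X_pow, natDegree_X]
    exact Nat.one_lt_two_pow hm.ne'
  have hP0 : P ≠ 0 := fun h => by rw [h, natDegree_zero] at hdeg; exact (Nat.two_pow_pos m).ne hdeg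
  have hsplits : (P.map (algebraMap K K)).Splits := IsAlgClosed.splits _
  have hset : {x : K | x ^ 2 ^ m = x} = P.rootSet K := by
    ext x
    simp only [Set.mem_setOf_eq, Polynomial.mem_rootSet, hP0, ne_eq, not_false_eq_true,
      true_and, hP, map_sub, aeval_X_pow, aeval_X, sub_eq_zero]
    exact ⟨fun h => ⟨fun h' => hP0 (by rw [hP, h', sub_self]), h⟩, fun h => h.2⟩
  have hcard := Polynomial.card_rootSet_eq_natDegree hsep hsplits
  rw [hset]
  refine ⟨(P.rootSet K).toFinite, ?_⟩
  rw [← Nat.card_coe_set_eq, Nat.card_eq_fintype_card, hcard, hdeg]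

end Stmt17Aux

open Stmt17Aux

theorem stmt_17 (n k : ℕ) (hn : 0 < n) (hk : 0 < k)
    (a : AlgebraicClosure (ZMod 2)) (ha : a ^ (2 ^ n) = a) :
    ((∃ x : AlgebraicClosure (ZMod 2), x ^ (2 ^ n) = x ∧ x ^ (2 ^ k) + x = a) ↔
        T (Nat.gcd n k) n a = 0) ∧
    (T (Nat.gcd n k) n a = 0 →
      Set.ncard {x : AlgebraicClosure (ZMod 2) | x ^ (2 ^ n) = x ∧ x ^ (2 ^ k) + x = a} =
        2 ^ Nat.gcd n k) := by
  classical
  set d := Nat.gcd n k with hd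
  have hd0 : 0 < d := Nat.gcd_pos_of_pos_left k hn
  have hdn : d ∣ n := Nat.gcd_dvd_left n k
  have hdk : d ∣ k := Nat.gcd_dvd_right n k
  set m := n / d with hm
  have hdm : d * m = n := Nat.mul_div_cancel' hdn
  have hm0 : 0 < m := Nat.div_pos (Nat.le_of_dvd hn hdn) hd0
  have hTdef : ∀ y : (AlgebraicClosure (ZMod 2)), T d n y = ∑ i ∈ Finset.range m, y ^ 2 ^ (d * i) := fun y => rfl
  -- additivity of L
  have hL_add : ∀ x y : (AlgebraicClosure (ZMod 2)), (x + y) ^ 2 ^ k + (x + y) = (x ^ 2 ^ k + x) + (y ^ 2 ^ k + y) := by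
    intro x y; rw [frob_add]; ring
  -- additivity of T
  have hT_add : ∀ x y : (AlgebraicClosure (ZMod 2)), T d n (x + y) = T d n x + T d n y := by
    intro x y
    simp only [hTdef, frob_add, Finset.sum_add_distrib]
  -- T is invariant under Frobenius^k on the subfield
  have hTS : ∀ x : (AlgebraicClosure (ZMod 2)), x ^ 2 ^ n = x → T d n (x ^ 2 ^ k) = T d n x := by
    intro x hx
    obtain ⟨c, hc⟩ := hdk
    have hper : ∀ j, x ^ 2 ^ (d * (j + m)) = x ^ 2 ^ (d * j) := by
      intro j
      rw [Nat.mul_add, hdm, Nat.add_comm, ← pow_pow, hx]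
    calc T d n (x ^ 2 ^ k)
        = ∑ i ∈ Finset.range m, x ^ 2 ^ (d * (c + i)) := by
          rw [hTdef]
          refine Finset.sum_congr rfl fun i _ => ?_
          rw [pow_pow, hc]
          congr 1
          ring_nf
      _ = ∑ i ∈ Finset.range m, x ^ 2 ^ (d * i) :=
          sum_shift m c (fun j => x ^ 2 ^ (d * j)) hper
      _ = T d n x := (hTdef x).symm
  have hTL0 : ∀ x : (AlgebraicClosure (ZMod 2)), x ^ 2 ^ n = x → T d n (x ^ 2 ^ k + x) = 0 := by
    intro x hx
    rw [hT_add, hTS x hx, CharTwo.add_self_eq_zero]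
  -- kernel description
  have hZ : ∀ x : (AlgebraicClosure (ZMod 2)), (x ^ 2 ^ n = x ∧ x ^ 2 ^ k + x = 0) ↔ x ^ 2 ^ d = x := by
    intro x
    constructor
    · rintro ⟨h1, h2⟩
      rw [CharTwo.add_eq_iff_eq_add, zero_add] at h2
      exact fixed_gcd x n k h1 h2
    · intro h
      exact ⟨fixed_of_dvd x hdn h, by rw [fixed_of_dvd x hdk h, CharTwo.add_self_eq_zero]⟩
  obtain ⟨hSfin, hScard⟩ := card_fixed n hn
  obtain ⟨hZfin, hZcard⟩ := card_fixed d hd0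
  -- fiber description
  have fiber_card : ∀ x0 : (AlgebraicClosure (ZMod 2)), x0 ^ 2 ^ n = x0 → ∀ b : (AlgebraicClosure (ZMod 2)), x0 ^ 2 ^ k + x0 = b →
      {x : (AlgebraicClosure (ZMod 2)) | x ^ 2 ^ n = x ∧ x ^ 2 ^ k + x = b}.ncard = 2 ^ d := by
    intro x0 hx0n b hx0b
    have fiber_eq : {x : (AlgebraicClosure (ZMod 2)) | x ^ 2 ^ n = x ∧ x ^ 2 ^ k + x = b}
        = (fun t => x0 + t) '' {x : (AlgebraicClosure (ZMod 2)) | x ^ 2 ^ d = x} := by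
      ext x
      simp only [Set.mem_image, Set.mem_setOf_eq]
      constructor
      · rintro ⟨h1, h2⟩
        refine ⟨x0 + x, ?_, ?_⟩
        · rw [← hZ]
          constructor
          · rw [frob_add, hx0n, h1]
          · rw [hL_add x0 x, hx0b, h2, CharTwo.add_self_eq_zero]
        · rw [← add_assoc, CharTwo.add_self_eq_zero, zero_add]
      · rintro ⟨t, ht, rfl⟩
        obtain ⟨ht1, ht2⟩ := (hZ t).mpr ht
        constructor
        · rw [frob_add, hx0n, ht1]
        · rw [hL_add x0 t, hx0b, ht2, add_zero]
    rw [fiber_eq, Set.ncard_image_of_injective _ (add_right_injective x0), hZcard]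
  -- counting argument for existence
  have hexists : T d n a = 0 → ∃ x : (AlgebraicClosure (ZMod 2)), x ^ 2 ^ n = x ∧ x ^ 2 ^ k + x = a := by
    intro hTa
    set L : (AlgebraicClosure (ZMod 2)) → (AlgebraicClosure (ZMod 2)) := fun x => x ^ 2 ^ k + x with hLdef
    set SF := hSfin.toFinset with hSF
    have hmemSF : ∀ x : (AlgebraicClosure (ZMod 2)), x ∈ SF ↔ x ^ 2 ^ n = x := by
      intro x; rw [hSF, Set.Finite.mem_toFinset]; rfl
    have hLS : ∀ x ∈ SF, L x ∈ SF := by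
      intro x hx
      rw [hmemSF] at hx ⊢
      show (x ^ 2 ^ k + x) ^ 2 ^ n = x ^ 2 ^ k + x
      have hxx : (x ^ 2 ^ k) ^ 2 ^ n = x ^ 2 ^ k := by
        rw [pow_pow, Nat.add_comm k n, ← pow_pow, hx]
      rw [frob_add, hxx, hx]
    set B := SF.image L with hB
    have hSFcard : SF.card = 2 ^ n := by
      rw [hSF, ← Set.ncard_eq_toFinset_card _ hSfin, hScard]
    have hcard_fiber : ∀ b ∈ B, (SF.filter fun x => L x = b).card = 2 ^ d := by
      intro b hb
      obtain ⟨x0, hx0S, hx0⟩ := Finset.mem_image.mp hb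
      rw [hmemSF] at hx0S
      have hcoe : ↑(SF.filter fun x => L x = b)
          = {x : (AlgebraicClosure (ZMod 2)) | x ^ 2 ^ n = x ∧ x ^ 2 ^ k + x = b} := by
        ext x
        simp only [Finset.coe_filter, Set.mem_setOf_eq, hmemSF, hLdef]
      have := fiber_card x0 hx0S b hx0
      rw [← hcoe, Set.ncard_coe_finset] at this
      exact this
    have hSB : SF.card = B.card * 2 ^ d := by
      rw [Finset.card_eq_sum_card_image L SF, ← hB,
        Finset.sum_congr rfl hcard_fiber, Finset.sum_const, smul_eq_mul]
    have hpow : 2 ^ (n - d) * 2 ^ d = 2 ^ n := by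
      rw [← pow_add]
      congr 1
      have := Nat.le_of_dvd hn hdn
      omega
    have hBcard : B.card = 2 ^ (n - d) := by
      have h1 : B.card * 2 ^ d = 2 ^ (n - d) * 2 ^ d := by rw [← hSB, hSFcard, hpow]
      exact Nat.eq_of_mul_eq_mul_right (Nat.two_pow_pos d) h1
    set W := SF.filter (fun x => T d n x = 0) with hW
    have hBW : B ⊆ W := by
      intro b hb
      obtain ⟨x0, hx0S, hx0⟩ := Finset.mem_image.mp hb
      rw [hmemSF] at hx0S
      rw [hW, Finset.mem_filter]
      refine ⟨?_, by rw [← hx0]; exact hTL0 x0 hx0S⟩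
      rw [← hx0]
      exact hLS x0 ((hmemSF x0).mpr hx0S)
    -- bound card W by polynomial roots
    have hWcard : W.card ≤ 2 ^ (n - d) := by
      set Q : (AlgebraicClosure (ZMod 2))[X] := ∑ i ∈ Finset.range m, X ^ 2 ^ (d * i) with hQ
      have hQeval : ∀ x : (AlgebraicClosure (ZMod 2)), Polynomial.eval x Q = T d n x := by
        intro x
        rw [hQ, Polynomial.eval_finset_sum, hTdef]
        simp
      have hQc : Q.coeff 1 = 1 := by
        rw [hQ, Polynomial.finset_sum_coeff]
        rw [Finset.sum_eq_single 0]
        · simp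
        · intro i _ hne
          rw [Polynomial.coeff_X_pow, if_neg]
          intro hcon
          have h2 : 2 ≤ 2 ^ (d * i) := by
            have : 1 ≤ d * i := Nat.one_le_iff_ne_zero.mpr (by positivity)
            calc 2 = 2 ^ 1 := rfl
              _ ≤ 2 ^ (d * i) := Nat.pow_le_pow_right (by norm_num) this
          omega
        · intro h0
          exact absurd (Finset.mem_range.mpr hm0) h0
      have hQ0 : Q ≠ 0 := fun h => by simp [h] at hQc
      have hQdeg : Q.natDegree ≤ 2 ^ (n - d) := by
        refine Polynomial.natDegree_sum_le_of_forall_le _ _ fun i hi => ?_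
        rw [Polynomial.natDegree_X_pow]
        refine Nat.pow_le_pow_right (by norm_num) ?_
        have hi' : i < m := Finset.mem_range.mp hi
        have : d * i ≤ d * (m - 1) := Nat.mul_le_mul_left d (by omega)
        have h2 : d * (m - 1) = n - d := by
          rw [Nat.mul_sub_one]
          omega
        omega
      have hsub : W ⊆ Q.roots.toFinset := by
        intro x hx
        rw [hW, Finset.mem_filter] at hx
        rw [Multiset.mem_toFinset, Polynomial.mem_roots hQ0]
        rw [Polynomial.IsRoot, hQeval]
        exact hx.2
      calc W.card ≤ Q.roots.toFinset.card := Finset.card_le_card hsub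
        _ ≤ Multiset.card Q.roots := Multiset.toFinset_card_le _
        _ ≤ Q.natDegree := Polynomial.card_roots' Q
        _ ≤ 2 ^ (n - d) := hQdeg
    have hBWeq : B = W := Finset.eq_of_subset_of_card_le hBW (by rw [hBcard]; exact hWcard)
    have haW : a ∈ W := by
      rw [hW, Finset.mem_filter, hmemSF]
      exact ⟨ha, hTa⟩
    rw [← hBWeq, hB] at haW
    obtain ⟨x0, hx0S, hx0⟩ := Finset.mem_image.mp haW
    rw [hmemSF] at hx0S
    exact ⟨x0, hx0S, hx0⟩
  constructor
  · constructor
    · rintro ⟨x, hx1, hx2⟩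
      rw [← hx2]
      exact hTL0 x hx1
    · exact hexists
  · intro hTa
    obtain ⟨x0, hx01, hx02⟩ := hexists hTa
    exact fiber_card x0 hx01 a hx02
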